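/- Let R_1,...,R_12 be the eventually periodic sequences in Z/2Z given by R_1 = 001(010000100001)^∞, R_2 = 0011110(001101010110)^∞, R_3 = 010(000101000010)^∞, R_4 = 0100001(010010111100001010111111)^∞, R_5 = 0100001(100100001001)^∞, R_6 = 0101011(010101100011)^∞, R_7 = 0101011(010111111101011010011101)^∞, R_8 = 010(101110110010)^∞, R_9 = 100(001000010100)^∞, R_10 = 1000010(110001101010)^∞, R_11 = 1111101(011000110101)^∞, R_12 = 111(110110000111)^∞. Then for every j with 1 ≤ j ≤ 12 and every integer k ≥ 0, the Steinhaus triangle of the initial segment R_j[4k+3] of length 4k+3 is strongly balanced in Z/2Z. -/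
import Mathlib


/-- Next row of a Steinhaus triangle: pairwise sums of adjacent entries. -/
def nextRow {m : ℕ} (l : List (ZMod m)) : List (ZMod m) :=
  List.zipWith (· + ·) l l.tail

/-- The rows of the Steinhaus triangle generated by the first row `l`. -/
def triangleRows {m : ℕ} (l : List (ZMod m)) : List (List (ZMod m)) :=
  (List.range l.length).map (fun i => nextRow^[i] l)

/-- All entries of the Steinhaus triangle generated by `l`. -/
def triangleEntries {m : ℕ} (l : List (ZMod m)) : List (ZMod m) :=
  (triangleRows l).flatten

/-- The Steinhaus triangle of `l` is balanced: all elements of `ZMod m`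
occur with the same multiplicity among its entries. -/
def IsBalanced {m : ℕ} (l : List (ZMod m)) : Prop :=
  ∀ a b : ZMod m, (triangleEntries l).count a = (triangleEntries l).count b

/-- The Steinhaus triangle of `l` is strongly balanced (with respect to a
given `step`): for every `t` with `step * t ≤ l.length`, the Steinhaus triangle
of the initial segment of `l` of length `l.length - step * t` is balanced. -/
def IsStronglyBalanced {m : ℕ} (step : ℕ) (l : List (ZMod m)) : Prop :=
  ∀ t : ℕ, step * t ≤ l.length → IsBalanced (l.take (l.length - step * t))

/-- The eventually periodic sequence with initial block `I` and period `P`. -/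
def evPeriodic {m : ℕ} (I P : List (ZMod m)) : ℕ → ZMod m :=
  fun i => if i < I.length then I.getD i 0 else P.getD ((i - I.length) % P.length) 0

/-- The initial segment of length `l` of the sequence `S`. -/
def seg {m : ℕ} (S : ℕ → ZMod m) (l : ℕ) : List (ZMod m) :=
  (List.range l).map S

def R1 : ℕ → ZMod 2 :=
  evPeriodic ([0,0,1] : List (ZMod 2)) ([0,1,0,0,0,0,1,0,0,0,0,1] : List (ZMod 2))

def R2 : ℕ → ZMod 2 :=
  evPeriodic ([0,0,1,1,1,1,0] : List (ZMod 2)) ([0,0,1,1,0,1,0,1,0,1,1,0] : List (ZMod 2))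

def R3 : ℕ → ZMod 2 :=
  evPeriodic ([0,1,0] : List (ZMod 2)) ([0,0,0,1,0,1,0,0,0,0,1,0] : List (ZMod 2))

def R4 : ℕ → ZMod 2 :=
  evPeriodic ([0,1,0,0,0,0,1] : List (ZMod 2)) ([0,1,0,0,1,0,1,1,1,1,0,0,0,0,1,0,1,0,1,1,1,1,1,1] : List (ZMod 2))

def R5 : ℕ → ZMod 2 :=
  evPeriodic ([0,1,0,0,0,0,1] : List (ZMod 2)) ([1,0,0,1,0,0,0,0,1,0,0,1] : List (ZMod 2))

def R6 : ℕ → ZMod 2 :=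
  evPeriodic ([0,1,0,1,0,1,1] : List (ZMod 2)) ([0,1,0,1,0,1,1,0,0,0,1,1] : List (ZMod 2))

def R7 : ℕ → ZMod 2 :=
  evPeriodic ([0,1,0,1,0,1,1] : List (ZMod 2)) ([0,1,0,1,1,1,1,1,1,1,0,1,0,1,1,0,1,0,0,1,1,1,0,1] : List (ZMod 2))

def R8 : ℕ → ZMod 2 :=
  evPeriodic ([0,1,0] : List (ZMod 2)) ([1,0,1,1,1,0,1,1,0,0,1,0] : List (ZMod 2))

def R9 : ℕ → ZMod 2 :=
  evPeriodic ([1,0,0] : List (ZMod 2)) ([0,0,1,0,0,0,0,1,0,1,0,0] : List (ZMod 2))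

def R10 : ℕ → ZMod 2 :=
  evPeriodic ([1,0,0,0,0,1,0] : List (ZMod 2)) ([1,1,0,0,0,1,1,0,1,0,1,0] : List (ZMod 2))

def R11 : ℕ → ZMod 2 :=
  evPeriodic ([1,1,1,1,1,0,1] : List (ZMod 2)) ([0,1,1,0,0,0,1,1,0,1,0,1] : List (ZMod 2))

def R12 : ℕ → ZMod 2 :=
  evPeriodic ([1,1,1] : List (ZMod 2)) ([1,1,0,1,1,0,0,0,0,1,1,1] : List (ZMod 2))

namespace SteinAux

def dfun (S : ℕ → ZMod 2) : ℕ → ZMod 2 := fun j => S j + S (j + 1)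

def c1 (l : List (ZMod 2)) : ℕ := l.count 1

def f (S : ℕ → ZMod 2) (n : ℕ) : ℕ := c1 (triangleEntries (seg S n))

def rC (S : ℕ → ZMod 2) (i w : ℕ) : ℕ := c1 (seg (dfun^[i] S) w)

def piC (S : ℕ → ZMod 2) (L p i : ℕ) : ℕ :=
  c1 ((nextRow^[i] (seg S (i + (L + p)))).drop L)

def EvP (L p : ℕ) (S : ℕ → ZMod 2) : Prop := ∀ j, L ≤ j → S (j + p) = S j

@[simp] lemma length_seg (S : ℕ → ZMod 2) (n : ℕ) : (seg S n).length = n := by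
  simp [seg]

lemma getElem_seg (S : ℕ → ZMod 2) (n i : ℕ) (h : i < (seg S n).length) :
    (seg S n)[i] = S i := by
  simp [seg]

lemma nextRow_seg (S : ℕ → ZMod 2) (n : ℕ) :
    nextRow (seg S (n + 1)) = seg (dfun S) n := by
  apply List.ext_getElem
  · simp [nextRow, seg]
  · intro i h1 h2
    simp [nextRow, seg, dfun, List.getElem_zipWith, List.getElem_tail]

lemma iter_nextRow_seg (i : ℕ) : ∀ (S : ℕ → ZMod 2) (n : ℕ),
    nextRow^[i] (seg S (i + n)) = seg (dfun^[i] S) n := by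
  induction i with
  | zero => intro S n; simp
  | succ i ih =>
    intro S n
    rw [show i + 1 + n = (i + n) + 1 by omega, Function.iterate_succ_apply, nextRow_seg, ih,
      ← Function.iterate_succ_apply, Function.iterate_succ_apply']

lemma seg_add (S : ℕ → ZMod 2) (a b : ℕ) :
    seg S (a + b) = seg S a ++ seg (fun j => S (a + j)) b := by
  simp [seg, List.range_add]

lemma seg_drop (S : ℕ → ZMod 2) (a b : ℕ) :
    (seg S (a + b)).drop a = seg (fun j => S (a + j)) b := by
  rw [seg_add]
  simpa using List.drop_left (seg S a) (seg (fun j => S (a + j)) b)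

lemma piC_eq (S : ℕ → ZMod 2) (L p i : ℕ) :
    piC S L p i = c1 (seg (fun j => dfun^[i] S (L + j)) p) := by
  rw [piC, iter_nextRow_seg, seg_drop]

lemma list_sum_range (g : ℕ → ℕ) (n : ℕ) :
    ((List.range n).map g).sum = ∑ i ∈ Finset.range n, g i := by
  induction n with
  | zero => simp
  | succ n ih =>
    rw [List.range_succ, Finset.sum_range_succ, List.map_append, List.sum_append, ih]; simp

lemma sum_range_add (g : ℕ → ℕ) (a b : ℕ) :
    ∑ i ∈ Finset.range (a + b), g i
      = (∑ i ∈ Finset.range a, g i) + ∑ i ∈ Finset.range b, g (a + i) := by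
  induction b with
  | zero => simp
  | succ b ih =>
    rw [show a + (b+1) = (a+b)+1 by omega, Finset.sum_range_succ, Finset.sum_range_succ, ih]
    omega

lemma f_eq (S : ℕ → ZMod 2) (n : ℕ) :
    f S n = ∑ i ∈ Finset.range n, rC S i (n - i) := by
  rw [f, triangleEntries, triangleRows, length_seg, c1, List.count_flatten, List.map_map,
    ← list_sum_range (fun i => rC S i (n - i)) n]
  congr 1
  apply List.map_congr_left
  intro i hi
  have hin : i < n := List.mem_range.mp hi
  simp only [Function.comp]
  rw [show seg S n = seg S (i + (n - i)) by rw [Nat.add_sub_cancel' hin.le],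
    iter_nextRow_seg]
  rfl

end SteinAux
namespace SteinAux

lemma evp_dfun {L p : ℕ} {S : ℕ → ZMod 2} (h : EvP L p S) : EvP L p (dfun S) := by
  intro j hj
  simp only [dfun]
  rw [show j + p + 1 = (j + 1) + p by omega, h j hj, h (j+1) (by omega)]

lemma evp_iter {L p : ℕ} {S : ℕ → ZMod 2} (h : EvP L p S) (i : ℕ) : EvP L p (dfun^[i] S) := by
  induction i with
  | zero => exact h
  | succ i ih => rw [Function.iterate_succ_apply']; exact evp_dfun ih

lemma ext_of_evp {L p : ℕ} {T₁ T₂ : ℕ → ZMod 2} (hp : 0 < p)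
    (h1 : EvP L p T₁) (h2 : EvP L p T₂)
    (hag : ∀ j < L + p, T₁ j = T₂ j) : ∀ j, T₁ j = T₂ j := by
  intro j
  induction j using Nat.strong_induction_on with
  | _ j ih =>
    by_cases hj : j < L + p
    · exact hag j hj
    · have hj' : j = (j - p) + p := by omega
      rw [hj', h1 _ (by omega), h2 _ (by omega)]
      exact ih _ (by omega)

lemma rows_eq_of_seg {L p : ℕ} {S : ℕ → ZMod 2} (hp : 0 < p) (hevp : EvP L p S) (i₁ i₂ : ℕ)
    (hlist : nextRow^[i₁] (seg S (i₁ + (L + p))) = nextRow^[i₂] (seg S (i₂ + (L + p)))) :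
    dfun^[i₁] S = dfun^[i₂] S := by
  rw [iter_nextRow_seg, iter_nextRow_seg] at hlist
  funext j
  refine ext_of_evp hp (evp_iter hevp i₁) (evp_iter hevp i₂) (fun j hj => ?_) j
  have := congrArg (fun l => l.getD j 0) hlist
  simpa [seg, List.getD, List.getElem?_map, List.getElem?_range, hj] using this

/-- sliding window: counts over length-p windows starting at ≥ L agree -/
lemma window_const {L p : ℕ} {S : ℕ → ZMod 2} (hevp : EvP L p S) :
    ∀ w, L ≤ w → c1 (seg (fun j => S (w + j)) p) = c1 (seg (fun j => S (L + j)) p) := by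
  intro w hw
  obtain ⟨d, rfl⟩ := Nat.exists_eq_add_of_le hw
  induction d with
  | zero => rfl
  | succ d ih =>
    rw [← ih (by omega)]
    have e1 : ∀ (T : ℕ → ZMod 2) (m : ℕ), c1 (seg T (1 + m)) = c1 (seg T m) + c1 (seg (fun j => T (m + j)) 1) := by
      intro T m
      rw [show (1:ℕ) + m = m + 1 by omega, seg_add]
      simp [c1, List.count_append]
    have e2 : ∀ (T : ℕ → ZMod 2) (m : ℕ), c1 (seg T (1 + m)) = c1 (seg T 1) + c1 (seg (fun j => T (1 + j)) m) := by
      intro T m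
      rw [seg_add]
      simp [c1, List.count_append]
    have h3 := e1 (fun j => S (L + d + j)) p
    have h4 := e2 (fun j => S (L + d + j)) p
    rw [h3] at h4
    have h5 : c1 (seg (fun j => S (L + d + (p + j))) 1) = c1 (seg (fun j => S (L + d + j)) 1) := by
      simp only [seg, List.range_succ, List.range_zero, List.map_append, List.map_cons,
        List.map_nil, List.nil_append]
      rw [show L + d + (p + 0) = (L + d + 0) + p by omega, hevp _ (by omega)]
    rw [h5] at h4
    have h6 : c1 (seg (fun j => S (L + (d + 1) + j)) p) = c1 (seg (fun j => S (L + d + (1 + j))) p) := by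
      congr 1
      apply List.map_congr_left
      intro a _
      congr 1
      omega
    rw [h6]
    omega

/-- row count step by one period -/
lemma row_step {L p : ℕ} {S : ℕ → ZMod 2} (hevp : EvP L p S) (i w : ℕ) (hw : L ≤ w) :
    rC S i (w + p) = rC S i w + piC S L p i := by
  rw [rC, seg_add, piC_eq, c1, List.count_append, ← c1, ← c1, ← rC]
  congr 1
  exact window_const (evp_iter hevp i) w hw

end SteinAux
namespace SteinAux

lemma master {S : ℕ → ZMod 2} {L ρ s kb : ℕ} (hs : 0 < s)
    (hevp : EvP L (4*s) S)
    (hrow : dfun^[ρ + 4*s] S = dfun^[ρ] S)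
    (hC : (∑ i ∈ Finset.range (ρ + 4*s), piC S L (4*s) i)
          = (∑ i ∈ Finset.range ρ, piC S L (4*s) i) + 8*s*s)
    (hkb : L + ρ + 8*s ≤ 4*kb + 3)
    (hbase : ∀ k < kb, f S (4*k+3) = (4*k+3)*(k+1)) :
    ∀ k, f S (4*k+3) = (4*k+3)*(k+1) := by
  set p := 4*s with hp
  -- row periodicity beyond ρ
  have hrow' : ∀ i, ρ ≤ i → dfun^[i + p] S = dfun^[i] S := by
    intro i hi
    obtain ⟨d, rfl⟩ := Nat.exists_eq_add_of_le hi
    rw [show ρ + d + p = d + (ρ + p) by omega, Function.iterate_add_apply, hrow,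
      ← Function.iterate_add_apply, show d + ρ = ρ + d by omega]
  have rC_row : ∀ i w, ρ ≤ i → rC S (i + p) w = rC S i w := by
    intro i w hi; rw [rC, hrow' i hi, ← rC]
  have piC_row : ∀ i, ρ ≤ i → piC S L p (i + p) = piC S L p i := by
    intro i hi; rw [piC_eq, piC_eq, hrow' i hi]
  -- E1
  have E1 : ∀ n, ρ ≤ n → f S (n + p) + (∑ i ∈ Finset.range ρ, rC S i (n - i))
      = (∑ i ∈ Finset.range (ρ + p), rC S i (n + p - i)) + f S n := by
    intro n hn
    obtain ⟨d, rfl⟩ : ∃ d, n = ρ + d := ⟨n - ρ, by omega⟩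
    have h1 : f S (ρ + d + p) = (∑ i ∈ Finset.range (ρ + p), rC S i (ρ + d + p - i))
        + ∑ i ∈ Finset.range d, rC S (ρ + i) (d - i) := by
      rw [f_eq, show ρ + d + p = (ρ + p) + d by omega, sum_range_add]
      congr 1
      refine Finset.sum_congr rfl fun i hi => ?_
      have := Finset.mem_range.mp hi
      rw [show ρ + p + i = (ρ + i) + p by omega, rC_row _ _ (by omega),
        show ρ + p + d - (ρ + i + p) = d - i by omega]
    have h2 : f S (ρ + d) = (∑ i ∈ Finset.range ρ, rC S i (ρ + d - i))
        + ∑ i ∈ Finset.range d, rC S (ρ + i) (d - i) := by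
      rw [f_eq, sum_range_add]
      congr 1
      refine Finset.sum_congr rfl fun i hi => ?_
      have := Finset.mem_range.mp hi
      congr 1
      omega
    omega
  -- A and B steps
  have EA : ∀ n, L + ρ ≤ n → (∑ i ∈ Finset.range ρ, rC S i (n + p - i))
      = (∑ i ∈ Finset.range ρ, rC S i (n - i)) + ∑ i ∈ Finset.range ρ, piC S L p i := by
    intro n hn
    rw [← Finset.sum_add_distrib]
    apply Finset.sum_congr rfl
    intro i hi
    have hi' : i < ρ := Finset.mem_range.mp hi
    rw [show n + p - i = (n - i) + p by omega, row_step hevp i (n - i) (by omega)]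
  have EB : ∀ n, L + ρ ≤ n → (∑ i ∈ Finset.range (ρ + p), rC S i (n + p + p - i))
      = (∑ i ∈ Finset.range (ρ + p), rC S i (n + p - i)) + ∑ i ∈ Finset.range (ρ + p), piC S L p i := by
    intro n hn
    rw [← Finset.sum_add_distrib]
    apply Finset.sum_congr rfl
    intro i hi
    have hi' : i < ρ + p := Finset.mem_range.mp hi
    have hsp : 0 < p := by omega
    rw [show n + p + p - i = (n + p - i) + p by omega, row_step hevp i (n + p - i) (by omega)]
  -- the recurrence
  have Rec : ∀ n, L + ρ ≤ n → f S (n + p + p) + f S n = 2 * f S (n + p) + 8*s*s := by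
    intro n hn
    have h1 := E1 n (by omega)
    have h2 := E1 (n + p) (by omega)
    have h3 := EA n hn
    have h4 := EB n hn
    omega
  -- main induction
  intro k
  induction k using Nat.strong_induction_on with
  | _ k ih =>
    by_cases hk : k < kb
    · exact hbase k hk
    · push_neg at hk
      have hk2 : 2*s ≤ k ∧ L + ρ ≤ 4*(k - 2*s) + 3 := by
        constructor <;> omega
      obtain ⟨hks, hkn⟩ := hk2
      obtain ⟨m, rfl⟩ : ∃ m, k = m + 2*s := ⟨k - 2*s, by omega⟩
      have hm : m = (m + 2*s) - 2*s := by omega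
      have hrec := Rec (4*m+3) (by omega)
      rw [show 4*m+3 + p + p = 4*(m+2*s)+3 by omega, show 4*m+3+p = 4*(m+s)+3 by omega] at hrec
      rw [ih m (by omega), ih (m + s) (by omega)] at hrec
      have hpoly : (4*(m+2*s)+3)*((m+2*s)+1) + (4*m+3)*(m+1)
          = 2 * ((4*(m+s)+3)*((m+s)+1)) + 8*s*s := by ring
      exact Nat.add_right_cancel (hrec.trans hpoly.symm)

end SteinAux
namespace SteinAux

lemma evp_evPeriodic (I P : List (ZMod 2)) : EvP I.length P.length (evPeriodic I P) := by
  intro j hj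
  simp only [evPeriodic]
  rw [if_neg (by omega), if_neg (by omega)]
  congr 1
  rw [show j + P.length - I.length = (j - I.length) + P.length by omega, Nat.add_mod_right]

lemma count01 (l : List (ZMod 2)) : l.count 0 + l.count 1 = l.length := by
  induction l with
  | nil => simp
  | cons x t ih =>
    have hx : x = 0 ∨ x = 1 := by revert x; decide
    rcases hx with rfl | rfl <;>
      simp [List.count_cons] <;> omega

lemma length_triangle (S : ℕ → ZMod 2) (n : ℕ) :
    (triangleEntries (seg S n)).length = ∑ i ∈ Finset.range n, (n - i) := by
  rw [triangleEntries, List.length_flatten, triangleRows, length_seg, List.map_map,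
    ← list_sum_range (fun i => n - i) n]
  congr 1
  apply List.map_congr_left
  intro i hi
  have hin : i < n := List.mem_range.mp hi
  simp only [Function.comp]
  rw [show seg S n = seg S (i + (n - i)) by rw [Nat.add_sub_cancel' hin.le],
    iter_nextRow_seg, length_seg]

lemma balanced_of_count {S : ℕ → ZMod 2} {k : ℕ}
    (h : f S (4*k+3) = (4*k+3)*(k+1)) : IsBalanced (seg S (4*k+3)) := by
  have hlen := length_triangle S (4*k+3)
  have h1 : ∑ i ∈ Finset.range (4*k+3), ((4*k+3) - i)
      = (∑ i ∈ Finset.range (4*k+3), (i+1)) := by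
    rw [← Finset.sum_range_reflect]
    apply Finset.sum_congr rfl
    intro i hi
    have := Finset.mem_range.mp hi
    omega
  have h2 : (∑ i ∈ Finset.range (4*k+3), (i+1))
      = (∑ i ∈ Finset.range (4*k+3), i) + (4*k+3) := by
    rw [Finset.sum_add_distrib]
    simp
  have hG := Finset.sum_range_id_mul_two (4*k+3)
  rw [show 4*k+3-1 = 4*k+2 by omega] at hG
  have he : (4*k+3)*(4*k+2) + 2*(4*k+3) = 4*((4*k+3)*(k+1)) := by ring
  have hcc := count01 (triangleEntries (seg S (4*k+3)))
  have hone : (triangleEntries (seg S (4*k+3))).count 1 = (4*k+3)*(k+1) := h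
  have hzero : (triangleEntries (seg S (4*k+3))).count 0 = (4*k+3)*(k+1) := by omega
  intro a b
  have hab : ∀ c : ZMod 2, c = 0 ∨ c = 1 := by decide
  rcases hab a with rfl | rfl <;> rcases hab b with rfl | rfl <;> omega

lemma take_seg (S : ℕ → ZMod 2) (n m : ℕ) (h : m ≤ n) : (seg S n).take m = seg S m := by
  simp only [seg, ← List.map_take, List.take_range, Nat.min_eq_left h]

lemma strong_of_all (S : ℕ → ZMod 2)
    (H : ∀ k, IsBalanced (seg S (4*k+3))) (k : ℕ) :
    IsStronglyBalanced 4 (seg S (4*k+3)) := by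
  intro t ht
  rw [length_seg] at ht ⊢
  rw [show 4*k+3 - 4*t = 4*(k-t)+3 by omega, take_seg _ _ _ (by omega)]
  exact H (k-t)

end SteinAux
namespace SteinAux

set_option maxRecDepth 400000 in
lemma mainR1 : ∀ k, f R1 (4*k+3) = (4*k+3)*(k+1) := by
  have hevp : EvP 3 (4*3) R1 := by
    have h := evp_evPeriodic ([0,0,1] : List (ZMod 2)) ([0,1,0,0,0,0,1,0,0,0,0,1] : List (ZMod 2))
    simpa [R1] using h
  refine master (ρ := 4) (kb := 7) (by norm_num) hevp ?_ (by decide) (by norm_num) (by decide)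
  exact rows_eq_of_seg (by norm_num) hevp (4 + 4*3) 4 (by decide)

set_option maxRecDepth 400000 in
lemma mainR2 : ∀ k, f R2 (4*k+3) = (4*k+3)*(k+1) := by
  have hevp : EvP 7 (4*3) R2 := by
    have h := evp_evPeriodic ([0,0,1,1,1,1,0] : List (ZMod 2)) ([0,0,1,1,0,1,0,1,0,1,1,0] : List (ZMod 2))
    simpa [R2] using h
  refine master (ρ := 0) (kb := 7) (by norm_num) hevp ?_ (by decide) (by norm_num) (by decide)
  exact rows_eq_of_seg (by norm_num) hevp (0 + 4*3) 0 (by decide)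

set_option maxRecDepth 400000 in
lemma mainR3 : ∀ k, f R3 (4*k+3) = (4*k+3)*(k+1) := by
  have hevp : EvP 3 (4*3) R3 := by
    have h := evp_evPeriodic ([0,1,0] : List (ZMod 2)) ([0,0,0,1,0,1,0,0,0,0,1,0] : List (ZMod 2))
    simpa [R3] using h
  refine master (ρ := 4) (kb := 7) (by norm_num) hevp ?_ (by decide) (by norm_num) (by decide)
  exact rows_eq_of_seg (by norm_num) hevp (4 + 4*3) 4 (by decide)

set_option maxRecDepth 400000 in
lemma mainR4 : ∀ k, f R4 (4*k+3) = (4*k+3)*(k+1) := by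
  have hevp : EvP 7 (4*6) R4 := by
    have h := evp_evPeriodic ([0,1,0,0,0,0,1] : List (ZMod 2)) ([0,1,0,0,1,0,1,1,1,1,0,0,0,0,1,0,1,0,1,1,1,1,1,1] : List (ZMod 2))
    simpa [R4] using h
  refine master (ρ := 6) (kb := 15) (by norm_num) hevp ?_ (by decide) (by norm_num) (by decide)
  exact rows_eq_of_seg (by norm_num) hevp (6 + 4*6) 6 (by decide)

set_option maxRecDepth 400000 in
lemma mainR5 : ∀ k, f R5 (4*k+3) = (4*k+3)*(k+1) := by
  have hevp : EvP 7 (4*3) R5 := by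
    have h := evp_evPeriodic ([0,1,0,0,0,0,1] : List (ZMod 2)) ([1,0,0,1,0,0,0,0,1,0,0,1] : List (ZMod 2))
    simpa [R5] using h
  refine master (ρ := 0) (kb := 7) (by norm_num) hevp ?_ (by decide) (by norm_num) (by decide)
  exact rows_eq_of_seg (by norm_num) hevp (0 + 4*3) 0 (by decide)

set_option maxRecDepth 400000 in
lemma mainR6 : ∀ k, f R6 (4*k+3) = (4*k+3)*(k+1) := by
  have hevp : EvP 7 (4*3) R6 := by
    have h := evp_evPeriodic ([0,1,0,1,0,1,1] : List (ZMod 2)) ([0,1,0,1,0,1,1,0,0,0,1,1] : List (ZMod 2))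
    simpa [R6] using h
  refine master (ρ := 0) (kb := 7) (by norm_num) hevp ?_ (by decide) (by norm_num) (by decide)
  exact rows_eq_of_seg (by norm_num) hevp (0 + 4*3) 0 (by decide)

set_option maxRecDepth 400000 in
lemma mainR7 : ∀ k, f R7 (4*k+3) = (4*k+3)*(k+1) := by
  have hevp : EvP 7 (4*6) R7 := by
    have h := evp_evPeriodic ([0,1,0,1,0,1,1] : List (ZMod 2)) ([0,1,0,1,1,1,1,1,1,1,0,1,0,1,1,0,1,0,0,1,1,1,0,1] : List (ZMod 2))
    simpa [R7] using h
  refine master (ρ := 6) (kb := 15) (by norm_num) hevp ?_ (by decide) (by norm_num) (by decide)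
  exact rows_eq_of_seg (by norm_num) hevp (6 + 4*6) 6 (by decide)

set_option maxRecDepth 400000 in
lemma mainR8 : ∀ k, f R8 (4*k+3) = (4*k+3)*(k+1) := by
  have hevp : EvP 3 (4*3) R8 := by
    have h := evp_evPeriodic ([0,1,0] : List (ZMod 2)) ([1,0,1,1,1,0,1,1,0,0,1,0] : List (ZMod 2))
    simpa [R8] using h
  refine master (ρ := 4) (kb := 7) (by norm_num) hevp ?_ (by decide) (by norm_num) (by decide)
  exact rows_eq_of_seg (by norm_num) hevp (4 + 4*3) 4 (by decide)

set_option maxRecDepth 400000 in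
lemma mainR9 : ∀ k, f R9 (4*k+3) = (4*k+3)*(k+1) := by
  have hevp : EvP 3 (4*3) R9 := by
    have h := evp_evPeriodic ([1,0,0] : List (ZMod 2)) ([0,0,1,0,0,0,0,1,0,1,0,0] : List (ZMod 2))
    simpa [R9] using h
  refine master (ρ := 4) (kb := 7) (by norm_num) hevp ?_ (by decide) (by norm_num) (by decide)
  exact rows_eq_of_seg (by norm_num) hevp (4 + 4*3) 4 (by decide)

set_option maxRecDepth 400000 in
lemma mainR10 : ∀ k, f R10 (4*k+3) = (4*k+3)*(k+1) := by
  have hevp : EvP 7 (4*3) R10 := by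
    have h := evp_evPeriodic ([1,0,0,0,0,1,0] : List (ZMod 2)) ([1,1,0,0,0,1,1,0,1,0,1,0] : List (ZMod 2))
    simpa [R10] using h
  refine master (ρ := 0) (kb := 7) (by norm_num) hevp ?_ (by decide) (by norm_num) (by decide)
  exact rows_eq_of_seg (by norm_num) hevp (0 + 4*3) 0 (by decide)

set_option maxRecDepth 400000 in
lemma mainR11 : ∀ k, f R11 (4*k+3) = (4*k+3)*(k+1) := by
  have hevp : EvP 7 (4*3) R11 := by
    have h := evp_evPeriodic ([1,1,1,1,1,0,1] : List (ZMod 2)) ([0,1,1,0,0,0,1,1,0,1,0,1] : List (ZMod 2))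
    simpa [R11] using h
  refine master (ρ := 0) (kb := 7) (by norm_num) hevp ?_ (by decide) (by norm_num) (by decide)
  exact rows_eq_of_seg (by norm_num) hevp (0 + 4*3) 0 (by decide)

set_option maxRecDepth 400000 in
lemma mainR12 : ∀ k, f R12 (4*k+3) = (4*k+3)*(k+1) := by
  have hevp : EvP 3 (4*3) R12 := by
    have h := evp_evPeriodic ([1,1,1] : List (ZMod 2)) ([1,1,0,1,1,0,0,0,0,1,1,1] : List (ZMod 2))
    simpa [R12] using h
  refine master (ρ := 4) (kb := 7) (by norm_num) hevp ?_ (by decide) (by norm_num) (by decide)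
  exact rows_eq_of_seg (by norm_num) hevp (4 + 4*3) 4 (by decide)

end SteinAux
open SteinAux in
theorem stmt12 (k : ℕ) :
    IsStronglyBalanced 4 (seg R1 (4 * k + 3)) ∧
    IsStronglyBalanced 4 (seg R2 (4 * k + 3)) ∧
    IsStronglyBalanced 4 (seg R3 (4 * k + 3)) ∧
    IsStronglyBalanced 4 (seg R4 (4 * k + 3)) ∧
    IsStronglyBalanced 4 (seg R5 (4 * k + 3)) ∧
    IsStronglyBalanced 4 (seg R6 (4 * k + 3)) ∧
    IsStronglyBalanced 4 (seg R7 (4 * k + 3)) ∧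
    IsStronglyBalanced 4 (seg R8 (4 * k + 3)) ∧
    IsStronglyBalanced 4 (seg R9 (4 * k + 3)) ∧
    IsStronglyBalanced 4 (seg R10 (4 * k + 3)) ∧
    IsStronglyBalanced 4 (seg R11 (4 * k + 3)) ∧
    IsStronglyBalanced 4 (seg R12 (4 * k + 3)) :=
  ⟨strong_of_all _ (fun k => balanced_of_count (mainR1 k)) k,
   strong_of_all _ (fun k => balanced_of_count (mainR2 k)) k,
   strong_of_all _ (fun k => balanced_of_count (mainR3 k)) k,
   strong_of_all _ (fun k => balanced_of_count (mainR4 k)) k,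
   strong_of_all _ (fun k => balanced_of_count (mainR5 k)) k,
   strong_of_all _ (fun k => balanced_of_count (mainR6 k)) k,
   strong_of_all _ (fun k => balanced_of_count (mainR7 k)) k,
   strong_of_all _ (fun k => balanced_of_count (mainR8 k)) k,
   strong_of_all _ (fun k => balanced_of_count (mainR9 k)) k,
   strong_of_all _ (fun k => balanced_of_count (mainR10 k)) k,
   strong_of_all _ (fun k => balanced_of_count (mainR11 k)) k,
   strong_of_all _ (fun k => balanced_of_count (mainR12 k)) k⟩
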